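/- (Uniform bound on the Dirichlet energy of the regularized correctors, resolvent form of the finiteness of the spectral integral ∫ λ^{−1} de_𝔡(λ).) For every μ > 0: E[φ_μ (𝓛 φ_μ)] ≤ β³|ξ|²/α²; in particular sup_{μ>0} E[φ_μ (𝓛 φ_μ)] < ∞. -/

import Mathlib

open MeasureTheory

namespace StochHom

/-- Edges of `ℤ^d`, indexed by their base vertex and their direction:
the pair `(x, i)` represents the edge `(x, x + eᵢ)`. -/
abbrev Edge (d : ℕ) := (Fin d → ℤ) × Fin d

/-- Environments: conductance functions `ω : 𝔹 → ℝ` (with values in `[α,β]`). -/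
abbrev Env (d : ℕ) := Edge d → ℝ

/-- The coordinate unit vector `eᵢ` of `ℤ^d`. -/
def unit {d : ℕ} (i : Fin d) : Fin d → ℤ := Pi.single i 1

/-- The shift `θ_z` of the environment: `(θ_z ω)_{(x,y)} = ω_{(x+z,y+z)}`. -/
def shift {d : ℕ} (z : Fin d → ℤ) (ω : Env d) : Env d :=
  fun e => ω (e.1 + z, e.2)

/-- Forward difference `Dᵢψ(ω) = ψ(θ_{eᵢ}ω) − ψ(ω)`. -/
def Dgrad {d : ℕ} (ψ : Env d → ℝ) (i : Fin d) (ω : Env d) : ℝ :=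
  ψ (shift (unit i) ω) - ψ ω

/-- Backward difference `Dᵢ*ψ(ω) = ψ(ω) − ψ(θ_{−eᵢ}ω)`. -/
def DgradStar {d : ℕ} (ψ : Env d → ℝ) (i : Fin d) (ω : Env d) : ℝ :=
  ψ ω - ψ (shift (-unit i) ω)

/-- The operator `𝓛ψ(ω) = Σ_{z∼0} ω_{(0,z)} (ψ(ω) − ψ(θ_z ω))`, the sum running over the
`2d` nearest neighbors `z` of `0` in `ℤ^d`.  The conductance of the edge `(0, eᵢ)` is
`ω (0, i)` and that of the edge `(0, −eᵢ)` is `ω (−eᵢ, i)`. -/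
def genL {d : ℕ} (ψ : Env d → ℝ) (ω : Env d) : ℝ :=
  ∑ i : Fin d,
    (ω (0, i) * (ψ ω - ψ (shift (unit i) ω))
      + ω (-unit i, i) * (ψ ω - ψ (shift (-unit i) ω)))

/-- The local drift `𝔡(ω) = Σ_{z∼0} ω_{(0,z)} (ξ·z)` in the direction `ξ`. -/
def drift {d : ℕ} (ξ : Fin d → ℝ) (ω : Env d) : ℝ :=
  ∑ i : Fin d, (ω (0, i) * ξ i + ω (-unit i, i) * (-ξ i))


lemma shift_shift {d : ℕ} (a b : Fin d → ℤ) (ω : Env d) :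
    shift a (shift b ω) = shift (a + b) ω := by
  funext e; simp [shift, add_assoc]

lemma shift_zero {d : ℕ} (ω : Env d) : shift 0 ω = ω := by
  funext e; simp [shift]

def shiftEquiv {d : ℕ} (z : Fin d → ℤ) : Env d ≃ᵐ Env d where
  toFun := shift z
  invFun := shift (-z)
  left_inv ω := by rw [shift_shift]; simp [shift_zero]
  right_inv ω := by rw [shift_shift]; simp [shift_zero]
  measurable_toFun := measurable_pi_lambda _ fun e => measurable_pi_apply _
  measurable_invFun := measurable_pi_lambda _ fun e => measurable_pi_apply _

lemma mul_int {X : Type*} [MeasurableSpace X] {Q : Measure X} {f g : X → ℝ}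
    (hf : MemLp f 2 Q) (hg : MemLp g 2 Q) :
    Integrable (fun x => f x * g x) Q := by
  have hb : Integrable (fun x => (f x ^ 2 + g x ^ 2) / 2) Q :=
    (hf.integrable_sq.add hg.integrable_sq).div_const 2
  refine Integrable.mono' hb (hf.1.mul hg.1) (Filter.Eventually.of_forall fun x => ?_)
  rw [Real.norm_eq_abs, abs_mul]
  nlinarith [abs_nonneg (f x), abs_nonneg (g x), sq_abs (f x), sq_abs (g x),
    sq_nonneg (|f x| - |g x|)]

lemma bmul_int {d : ℕ} {P : Measure (Env d)} {β : ℝ} {f g : Env d → ℝ} (e : Edge d)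
    (hbd : ∀ᵐ ω ∂P, ‖ω e‖ ≤ β) (hf : MemLp f 2 P) (hg : MemLp g 2 P) :
    Integrable (fun ω => ω e * (f ω * g ω)) P :=
  (mul_int hf hg).bdd_mul (measurable_pi_apply e).aestronglyMeasurable hbd


set_option maxHeartbeats 2000000 in
set_option synthInstance.maxHeartbeats 1000000 in
/-- uniform bound on the Dirichlet energy of the regularized correctors:
for every `μ > 0`, `E[φ_μ (𝓛 φ_μ)] ≤ β³|ξ|²/α²`; in particular
`sup_{μ>0} E[φ_μ (𝓛 φ_μ)] < ∞`. -/
theorem statement5 {d : ℕ} (hd : 1 ≤ d) {α β : ℝ} (hα : 0 < α) (hαβ : α ≤ β)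
    (P : Measure (Env d)) [IsProbabilityMeasure P]
    (hsupp : ∀ᵐ ω ∂P, ∀ e, ω e ∈ Set.Icc α β)
    (hshift : ∀ z : Fin d → ℤ, MeasurePreserving (shift z) P P)
    (ξ : Fin d → ℝ) (μ : ℝ) (hμ : 0 < μ)
    (φμ : Env d → ℝ) (hφ : MemLp φμ 2 P)
    (heq : ∀ᵐ ω ∂P, μ * φμ ω + genL φμ ω = drift ξ ω) :
    ∫ ω, φμ ω * genL φμ ω ∂P ≤ β ^ 3 * (∑ i, ξ i ^ 2) / α ^ 2 := by
  have hβ0 : 0 < β := lt_of_lt_of_le hα hαβ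
  -- a.e. bounds
  have hbd : ∀ (e : Edge d), ∀ᵐ ω ∂P, ‖ω e‖ ≤ β := fun e =>
    hsupp.mono fun ω h => by
      have := h e
      rw [Real.norm_eq_abs, abs_le]
      constructor <;> nlinarith [this.1, this.2]
  -- change of variables
  have hCOV : ∀ (z : Fin d → ℤ) (h : Env d → ℝ),
      ∫ ω, h (shift z ω) ∂P = ∫ ω, h ω ∂P := fun z h =>
    (hshift z).integral_comp (shiftEquiv z).measurableEmbedding h
  -- MemLp facts
  have hφz : ∀ z : Fin d → ℤ, MemLp (fun ω => φμ (shift z ω)) 2 P := fun z =>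
    hφ.comp_measurePreserving (hshift z)
  have hDφ : ∀ i : Fin d, MemLp (fun ω => φμ (shift (unit i) ω) - φμ ω) 2 P := fun i =>
    (hφz _).sub hφ
  have hDφ' : ∀ i : Fin d, MemLp (fun ω => φμ ω - φμ (shift (unit i) ω)) 2 P := fun i =>
    hφ.sub (hφz _)
  have hDφ'' : ∀ i : Fin d, MemLp (fun ω => φμ ω - φμ (shift (-unit i) ω)) 2 P := fun i =>
    hφ.sub (hφz _)
  have hDφ''' : ∀ i : Fin d, MemLp (fun ω => φμ (shift (unit i) ω) - φμ ω) 2 P := hDφ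
  -- integrabilities
  have I1 : ∀ i : Fin d, Integrable
      (fun ω => ω (0, i) * (φμ ω * (φμ ω - φμ (shift (unit i) ω)))) P := fun i =>
    bmul_int _ (hbd _) hφ (hDφ' i)
  have I2 : ∀ i : Fin d, Integrable
      (fun ω => ω (-unit i, i) * (φμ ω * (φμ ω - φμ (shift (-unit i) ω)))) P := fun i =>
    bmul_int _ (hbd _) hφ (hDφ'' i)
  have I3 : ∀ i : Fin d, Integrable
      (fun ω => ω (0, i) * (φμ (shift (unit i) ω) * (φμ (shift (unit i) ω) - φμ ω))) P := fun i =>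
    bmul_int _ (hbd _) (hφz _) (hDφ i)
  have I4 : ∀ i : Fin d, Integrable
      (fun ω => ω (0, i) * ((φμ (shift (unit i) ω) - φμ ω) * (φμ (shift (unit i) ω) - φμ ω))) P :=
    fun i => bmul_int _ (hbd _) (hDφ i) (hDφ i)
  have J1 : ∀ i : Fin d, Integrable
      (fun ω => ω (0, i) * (φμ ω * ξ i)) P := fun i =>
    bmul_int _ (hbd _) hφ (memLp_const _)
  have J2 : ∀ i : Fin d, Integrable
      (fun ω => ω (-unit i, i) * (φμ ω * (-ξ i))) P := fun i =>
    bmul_int _ (hbd _) hφ (memLp_const _)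
  have J3 : ∀ i : Fin d, Integrable
      (fun ω => ω (0, i) * (φμ (shift (unit i) ω) * (-ξ i))) P := fun i =>
    bmul_int _ (hbd _) (hφz _) (memLp_const _)
  have J4 : ∀ i : Fin d, Integrable
      (fun ω => ω (0, i) * ((-ξ i) * (φμ (shift (unit i) ω) - φμ ω))) P := fun i =>
    bmul_int _ (hbd _) (memLp_const _) (hDφ i)
  -- pointwise expansions
  have expandL : ∀ ω : Env d, φμ ω * genL φμ ω =
      ∑ i : Fin d, (ω (0, i) * (φμ ω * (φμ ω - φμ (shift (unit i) ω)))
        + ω (-unit i, i) * (φμ ω * (φμ ω - φμ (shift (-unit i) ω)))) := by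
    intro ω
    rw [genL, Finset.mul_sum]
    exact Finset.sum_congr rfl fun i _ => by ring
  have expandD : ∀ ω : Env d, φμ ω * drift ξ ω =
      ∑ i : Fin d, (ω (0, i) * (φμ ω * ξ i) + ω (-unit i, i) * (φμ ω * (-ξ i))) := by
    intro ω
    rw [drift, Finset.mul_sum]
    exact Finset.sum_congr rfl fun i _ => by ring
  -- shift identity used for both claims
  have shift_cancel : ∀ (i : Fin d) (ω : Env d), shift (unit i) (shift (-unit i) ω) = ω := by
    intro i ω; rw [shift_shift]; simp [shift_zero]
  have shift_eval : ∀ (i : Fin d) (ω : Env d), (shift (-unit i) ω) (0, i) = ω (-unit i, i) := by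
    intro i ω; simp [shift]
  -- Claim A : Dirichlet form representation
  have hA : ∫ ω, φμ ω * genL φμ ω ∂P = ∑ i : Fin d,
      ∫ ω, ω (0, i) * ((φμ (shift (unit i) ω) - φμ ω) * (φμ (shift (unit i) ω) - φμ ω)) ∂P := by
    have e1 : (fun ω => φμ ω * genL φμ ω) = fun ω =>
        ∑ i : Fin d, (ω (0, i) * (φμ ω * (φμ ω - φμ (shift (unit i) ω)))
          + ω (-unit i, i) * (φμ ω * (φμ ω - φμ (shift (-unit i) ω)))) := funext expandL
    rw [e1]
    rw [integral_finset_sum Finset.univ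
      (f := fun (i : Fin d) (ω : Env d) => ω (0, i) * (φμ ω * (φμ ω - φμ (shift (unit i) ω)))
        + ω (-unit i, i) * (φμ ω * (φμ ω - φμ (shift (-unit i) ω))))
      (fun i _ => (I1 i).add (I2 i))]
    refine Finset.sum_congr rfl fun i _ => ?_
    rw [integral_add (I1 i) (I2 i)]
    have h2 : ∫ ω, ω (-unit i, i) * (φμ ω * (φμ ω - φμ (shift (-unit i) ω))) ∂P
        = ∫ ω, ω (0, i) * (φμ (shift (unit i) ω) * (φμ (shift (unit i) ω) - φμ ω)) ∂P := by
      rw [← hCOV (-unit i)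
        (fun σ => σ (0, i) * (φμ (shift (unit i) σ) * (φμ (shift (unit i) σ) - φμ σ)))]
      congr 1
      funext ω
      rw [shift_cancel i ω, shift_eval i ω]
    rw [h2, ← integral_add (I1 i) (I3 i)]
    exact integral_congr_ae (Filter.Eventually.of_forall fun ω => by ring)
  -- Claim B : drift pairing representation
  have hB : ∫ ω, φμ ω * drift ξ ω ∂P = ∑ i : Fin d,
      ∫ ω, ω (0, i) * ((-ξ i) * (φμ (shift (unit i) ω) - φμ ω)) ∂P := by
    have e1 : (fun ω => φμ ω * drift ξ ω) = fun ω =>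
        ∑ i : Fin d, (ω (0, i) * (φμ ω * ξ i) + ω (-unit i, i) * (φμ ω * (-ξ i))) :=
      funext expandD
    rw [e1]
    rw [integral_finset_sum Finset.univ
      (f := fun (i : Fin d) (ω : Env d) => ω (0, i) * (φμ ω * ξ i)
        + ω (-unit i, i) * (φμ ω * (-ξ i)))
      (fun i _ => (J1 i).add (J2 i))]
    refine Finset.sum_congr rfl fun i _ => ?_
    rw [integral_add (J1 i) (J2 i)]
    have h2 : ∫ ω, ω (-unit i, i) * (φμ ω * (-ξ i)) ∂P
        = ∫ ω, ω (0, i) * (φμ (shift (unit i) ω) * (-ξ i)) ∂P := by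
      rw [← hCOV (-unit i) (fun σ => σ (0, i) * (φμ (shift (unit i) σ) * (-ξ i)))]
      congr 1
      funext ω
      rw [shift_cancel i ω, shift_eval i ω]
    rw [h2, ← integral_add (J1 i) (J3 i)]
    exact integral_congr_ae (Filter.Eventually.of_forall fun ω => by ring)
  -- integrability of φ·𝓛φ
  have hIntL : Integrable (fun ω => φμ ω * genL φμ ω) P := by
    rw [funext expandL]
    exact integrable_finset_sum _ fun i _ => (I1 i).add (I2 i)
  -- Claim C : the resolvent identity integrated against φ
  have hC : ∫ ω, φμ ω * drift ξ ω ∂P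
      = μ * ∫ ω, φμ ω * φμ ω ∂P + ∫ ω, φμ ω * genL φμ ω ∂P := by
    have h1 : ∀ᵐ ω ∂P, φμ ω * drift ξ ω = μ * (φμ ω * φμ ω) + φμ ω * genL φμ ω :=
      heq.mono fun ω h => by rw [← h]; ring
    rw [integral_congr_ae h1, integral_add ((mul_int hφ hφ).const_mul μ) hIntL,
      integral_const_mul]
  -- positivity of the μ-term
  have hpos : 0 ≤ μ * ∫ ω, φμ ω * φμ ω ∂P :=
    mul_nonneg hμ.le (integral_nonneg fun ω => mul_self_nonneg _)
  -- mass of each conductance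
  have intA : ∀ e : Edge d, Integrable (fun ω => ω e) P := by
    intro e
    have := bmul_int e (hbd e) (memLp_const (1 : ℝ)) (memLp_const (1 : ℝ))
    simpa using this
  have hmass : ∀ e : Edge d, ∫ ω, ω e ∂P ≤ β := by
    intro e
    calc ∫ ω, ω e ∂P ≤ ∫ _ω, β ∂P := by
          refine integral_mono_ae (intA e) (integrable_const β)
            (hsupp.mono fun ω h => (h e).2)
      _ = β := by simp
  -- per-coordinate Young bound
  have hbound : ∀ i : Fin d,
      ∫ ω, ω (0, i) * ((-ξ i) * (φμ (shift (unit i) ω) - φμ ω)) ∂P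
        ≤ β * (ξ i * ξ i) * (1 / 2)
          + (∫ ω, ω (0, i) * ((φμ (shift (unit i) ω) - φμ ω)
              * (φμ (shift (unit i) ω) - φμ ω)) ∂P) * (1 / 2) := by
    intro i
    have K1 : Integrable (fun ω => ω (0, i) * (ξ i * ξ i)) P := by
      have := bmul_int (0, i) (hbd _) (memLp_const (ξ i)) (memLp_const (ξ i))
      simpa using this
    have K2 : Integrable (fun ω => ω (0, i) * (ξ i * ξ i) * (1 / 2)
        + ω (0, i) * ((φμ (shift (unit i) ω) - φμ ω) * (φμ (shift (unit i) ω) - φμ ω))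
          * (1 / 2)) P :=
      (K1.mul_const _).add ((I4 i).mul_const _)
    have step : ∫ ω, ω (0, i) * ((-ξ i) * (φμ (shift (unit i) ω) - φμ ω)) ∂P
        ≤ ∫ ω, (ω (0, i) * (ξ i * ξ i) * (1 / 2)
          + ω (0, i) * ((φμ (shift (unit i) ω) - φμ ω) * (φμ (shift (unit i) ω) - φμ ω))
            * (1 / 2)) ∂P := by
      refine integral_mono_ae (J4 i) K2 (hsupp.mono fun ω h => ?_)
      have h0 : (0:ℝ) ≤ ω (0, i) := le_trans hα.le (h (0, i)).1
      nlinarith [sq_nonneg (ξ i + (φμ (shift (unit i) ω) - φμ ω)),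
        mul_nonneg h0 (sq_nonneg (ξ i + (φμ (shift (unit i) ω) - φμ ω)))]
    refine le_trans step ?_
    rw [integral_add (K1.mul_const _) ((I4 i).mul_const _), integral_mul_const,
      integral_mul_const, integral_mul_const]
    have : (∫ ω, ω (0, i) ∂P) * (ξ i * ξ i) ≤ β * (ξ i * ξ i) :=
      mul_le_mul_of_nonneg_right (hmass _) (mul_self_nonneg _)
    nlinarith [this]
  -- put everything together
  set D := ∫ ω, φμ ω * genL φμ ω ∂P with hD
  have hsum : D ≤ β * (∑ i : Fin d, ξ i * ξ i) * (1 / 2) + D * (1 / 2) := by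
    have h1 : D ≤ ∫ ω, φμ ω * drift ξ ω ∂P := by
      rw [hC]; linarith [hpos]
    have h2 : ∫ ω, φμ ω * drift ξ ω ∂P ≤ ∑ i : Fin d,
        (β * (ξ i * ξ i) * (1 / 2)
          + (∫ ω, ω (0, i) * ((φμ (shift (unit i) ω) - φμ ω)
              * (φμ (shift (unit i) ω) - φμ ω)) ∂P) * (1 / 2)) := by
      rw [hB]
      exact Finset.sum_le_sum fun i _ => hbound i
    have h3 : ∑ i : Fin d,
        (β * (ξ i * ξ i) * (1 / 2)
          + (∫ ω, ω (0, i) * ((φμ (shift (unit i) ω) - φμ ω)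
              * (φμ (shift (unit i) ω) - φμ ω)) ∂P) * (1 / 2))
        = β * (∑ i : Fin d, ξ i * ξ i) * (1 / 2) + D * (1 / 2) := by
      rw [Finset.sum_add_distrib, ← Finset.sum_mul, ← Finset.sum_mul, ← Finset.mul_sum, ← hA]
    linarith [le_trans h1 (le_of_le_of_eq h2 h3)]
  have hDle : D ≤ β * (∑ i : Fin d, ξ i ^ 2) := by
    have : (∑ i : Fin d, ξ i * ξ i) = ∑ i : Fin d, ξ i ^ 2 :=
      Finset.sum_congr rfl fun i _ => (sq (ξ i)).symm
    rw [this] at hsum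
    linarith
  have hs0 : (0:ℝ) ≤ ∑ i : Fin d, ξ i ^ 2 := Finset.sum_nonneg fun i _ => sq_nonneg _
  refine le_trans hDle ?_
  rw [le_div_iff₀ (pow_pos hα 2)]
  nlinarith [mul_nonneg (mul_nonneg hβ0.le hs0)
    (mul_nonneg (sub_nonneg.2 hαβ) (by linarith : (0:ℝ) ≤ α + β))]


end StochHom
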